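/- The function g₂(t) = 2(exp(t) - 1 - t)/t², extended by continuity with g₂(0) = 1, is monotone increasing on ℝ. -/

import Mathlib

noncomputable def g2 (t : ℝ) : ℝ := if t = 0 then 1 else 2 * (Real.exp t - 1 - t) / t ^ 2

open Real Set

private lemma hasDerivAt_p (x : ℝ) :
    HasDerivAt (fun t : ℝ => (t - 1) * Real.exp t + 1) (x * Real.exp x) x := by
  have h1 : HasDerivAt (fun t : ℝ => t - 1) 1 x := (hasDerivAt_id x).sub_const 1
  have h2 := (h1.mul (Real.hasDerivAt_exp x)).add_const 1
  exact h2.congr_deriv (by ring)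

private lemma p_nonneg (t : ℝ) : 0 ≤ (t - 1) * Real.exp t + 1 := by
  have hc : Continuous fun t : ℝ => (t - 1) * Real.exp t + 1 := by continuity
  have key : ∀ x : ℝ, deriv (fun t : ℝ => (t - 1) * Real.exp t + 1) x = x * Real.exp x :=
    fun x => (hasDerivAt_p x).deriv
  have h0 : ((0:ℝ) - 1) * Real.exp 0 + 1 = 0 := by simp
  rcases le_total 0 t with h | h
  · have hm : MonotoneOn (fun t : ℝ => (t - 1) * Real.exp t + 1) (Ici 0) := by
      apply monotoneOn_of_deriv_nonneg (convex_Ici 0) hc.continuousOn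
        (fun x _ => (hasDerivAt_p x).differentiableAt.differentiableWithinAt)
      intro x hx
      rw [key]
      have : (0:ℝ) < x := by simpa using hx
      positivity
    have := hm (mem_Ici.mpr le_rfl) h h
    simp only [] at this
    linarith [this]
  · have hm : AntitoneOn (fun t : ℝ => (t - 1) * Real.exp t + 1) (Iic 0) := by
      apply antitoneOn_of_deriv_nonpos (convex_Iic 0) hc.continuousOn
        (fun x _ => (hasDerivAt_p x).differentiableAt.differentiableWithinAt)
      intro x hx
      rw [key]
      have hx0 : x < 0 := by simpa using hx
      exact mul_nonpos_of_nonpos_of_nonneg hx0.le (Real.exp_pos x).le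
    have := hm h (mem_Iic.mpr le_rfl) h
    simp only [] at this
    linarith [this]

private lemma h_mono : Monotone (fun t : ℝ => (t - 2) * Real.exp t + t + 2) := by
  have hd : ∀ x : ℝ, HasDerivAt (fun t : ℝ => (t - 2) * Real.exp t + t + 2)
      ((x - 1) * Real.exp x + 1) x := by
    intro x
    have h1 : HasDerivAt (fun t : ℝ => t - 2) 1 x := (hasDerivAt_id x).sub_const 2
    have h2 := ((h1.mul (Real.hasDerivAt_exp x)).add (hasDerivAt_id x)).add_const 2
    exact h2.congr_deriv (by ring)
  have hdiff : Differentiable ℝ fun t : ℝ => (t - 2) * Real.exp t + t + 2 :=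
    fun x => (hd x).differentiableAt
  apply monotone_of_deriv_nonneg hdiff
  intro x
  rw [(hd x).deriv]
  exact p_nonneg x

private lemma h_sign_pos {t : ℝ} (ht : 0 ≤ t) : 0 ≤ (t - 2) * Real.exp t + t + 2 := by
  have := h_mono ht
  simpa using this

private lemma h_sign_neg {t : ℝ} (ht : t ≤ 0) : (t - 2) * Real.exp t + t + 2 ≤ 0 := by
  have := h_mono ht
  simpa using this

private lemma q_mono : Monotone (fun t : ℝ => Real.exp t - 1 - t - t ^ 2 / 2) := by
  have hd : ∀ x : ℝ, HasDerivAt (fun t : ℝ => Real.exp t - 1 - t - t ^ 2 / 2)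
      (Real.exp x - 1 - x) x := by
    intro x
    have h1 := ((Real.hasDerivAt_exp x).sub_const 1).sub (hasDerivAt_id x)
    have h2 : HasDerivAt (fun t : ℝ => t ^ 2 / 2) x x := by
      have := (hasDerivAt_pow 2 x).div_const 2
      exact this.congr_deriv (by push_cast; ring)
    have := h1.sub h2
    exact this
  have hdiff : Differentiable ℝ fun t : ℝ => Real.exp t - 1 - t - t ^ 2 / 2 :=
    fun x => (hd x).differentiableAt
  apply monotone_of_deriv_nonneg hdiff
  intro x
  rw [(hd x).deriv]
  have := Real.add_one_le_exp x
  linarith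

private lemma q_pos {t : ℝ} (ht : 0 ≤ t) : 1 + t + t ^ 2 / 2 ≤ Real.exp t := by
  have := q_mono ht
  simp only [Real.exp_zero] at this
  nlinarith [this]

private lemma q_neg {t : ℝ} (ht : t ≤ 0) : Real.exp t ≤ 1 + t + t ^ 2 / 2 := by
  have := q_mono ht
  simp only [Real.exp_zero] at this
  nlinarith [this]

private noncomputable def f (t : ℝ) : ℝ := 2 * (Real.exp t - 1 - t) / t ^ 2

private lemma hasDerivAt_f {x : ℝ} (hx : x ≠ 0) :
    HasDerivAt f ((2 * (Real.exp x - 1) * x ^ 2 - 2 * (Real.exp x - 1 - x) * (2 * x)) / (x ^ 2) ^ 2) x := by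
  have hu : HasDerivAt (fun t : ℝ => 2 * (Real.exp t - 1 - t)) (2 * (Real.exp x - 1)) x := by
    have := (((Real.hasDerivAt_exp x).sub_const 1).sub (hasDerivAt_id x)).const_mul 2
    exact this
  have hv : HasDerivAt (fun t : ℝ => t ^ 2) (2 * x) x := by
    have := hasDerivAt_pow 2 x
    exact this.congr_deriv (by push_cast; ring)
  exact hu.div hv (pow_ne_zero 2 hx)

private lemma deriv_f_nonneg {x : ℝ} (hx : x ≠ 0) : 0 ≤ deriv f x := by
  rw [(hasDerivAt_f hx).deriv]
  have hnum : 2 * (Real.exp x - 1) * x ^ 2 - 2 * (Real.exp x - 1 - x) * (2 * x)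
      = 2 * x * ((x - 2) * Real.exp x + x + 2) := by ring
  rw [hnum]
  apply div_nonneg _ (by positivity)
  rcases lt_or_gt_of_ne hx with h | h
  · nlinarith [h_sign_neg h.le, h]
  · exact mul_nonneg (by linarith) (h_sign_pos h.le)

private lemma f_contOn_ne : ContinuousOn f {x : ℝ | x ≠ 0} := by
  apply ContinuousOn.div
  · exact (Continuous.continuousOn (by continuity))
  · exact (Continuous.continuousOn (by continuity))
  · intro x hx; exact pow_ne_zero 2 hx

private lemma f_mono_Iio : MonotoneOn f (Iio 0) := by
  apply monotoneOn_of_deriv_nonneg (convex_Iio 0)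
    (f_contOn_ne.mono (fun x hx => ne_of_lt hx))
    (fun x hx => by
      rw [interior_Iio] at hx
      exact (hasDerivAt_f (ne_of_lt hx)).differentiableAt.differentiableWithinAt)
  intro x hx
  rw [interior_Iio] at hx
  exact deriv_f_nonneg (ne_of_lt hx)

private lemma f_mono_Ioi : MonotoneOn f (Ioi 0) := by
  apply monotoneOn_of_deriv_nonneg (convex_Ioi 0)
    (f_contOn_ne.mono (fun x hx => ne_of_gt hx))
    (fun x hx => by
      rw [interior_Ioi] at hx
      exact (hasDerivAt_f (ne_of_gt hx)).differentiableAt.differentiableWithinAt)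
  intro x hx
  rw [interior_Ioi] at hx
  exact deriv_f_nonneg (ne_of_gt hx)

private lemma g2_eq_f {t : ℝ} (ht : t ≠ 0) : g2 t = f t := by
  simp [g2, f, ht]

private lemma g2_le_one {t : ℝ} (ht : t < 0) : g2 t ≤ 1 := by
  rw [g2_eq_f ht.ne, f]
  rw [div_le_one (pow_two_pos_of_ne_zero ht.ne)]
  have := q_neg ht.le
  nlinarith

private lemma one_le_g2 {t : ℝ} (ht : 0 < t) : 1 ≤ g2 t := by
  rw [g2_eq_f ht.ne', f]
  rw [le_div_iff₀ (by positivity)]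
  have := q_pos ht.le
  nlinarith

theorem g2_monotone : Monotone g2 := by
  intro a b hab
  rcases lt_trichotomy a 0 with ha | ha | ha
  · rcases lt_trichotomy b 0 with hb | hb | hb
    · rw [g2_eq_f ha.ne, g2_eq_f hb.ne]
      exact f_mono_Iio ha hb hab
    · rw [hb]; simpa [g2] using g2_le_one ha
    · exact le_trans (g2_le_one ha) (one_le_g2 hb)
  · subst ha
    rcases eq_or_lt_of_le hab with rfl | hb
    · exact le_refl _
    · have : g2 0 = 1 := by simp [g2]
      rw [this]; exact one_le_g2 hb
  · have hb : 0 < b := lt_of_lt_of_le ha hab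
    rw [g2_eq_f ha.ne', g2_eq_f hb.ne']
    exact f_mono_Ioi ha hb hab
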